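/- Let λ > 1, x₀ > 0, c > 0, let Λ : ℝ³ → ℝ³ be the map Λ(x,y,z) = (λ⁻¹x, λy, z), and let f : ℝ³ → ℝ³ be a map such that: (i) for all p with |π_s(p)| ≤ x₀ one has |π_s(f(p))| ≤ x₀, and (ii) for all p with |π_s(p)| ≤ x₀ one has ‖f(p) − Λ(p)‖ ≤ c in the Euclidean norm. Then: (a) for all y, z > 0, f(B(x₀,y,z)) ⊆ B(x₀, λy + c, z + c); and (b) for every β > λ there exists y₀ > 0 such that for all y > y₀, all z > 0, and all positive integers n, fⁿ(B(x₀,y,z)) ⊆ B(x₀, βⁿy, z + nc). -/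

import Mathlib

/-- The box B(a,b,d) = {(x,y,z) ∈ ℝ³ : |x| ≤ a, |y| ≤ b, |z| ≤ d}. -/
def Box (a b d : ℝ) : Set (ℝ × ℝ × ℝ) :=
  {p : ℝ × ℝ × ℝ | |p.1| ≤ a ∧ |p.2.1| ≤ b ∧ |p.2.2| ≤ d}

lemma comp_bound (u v w c : ℝ) (h : Real.sqrt (u ^ 2 + v ^ 2 + w ^ 2) ≤ c) :
    |u| ≤ c ∧ |v| ≤ c ∧ |w| ≤ c := by
  have hu : |u| ≤ Real.sqrt (u ^ 2 + v ^ 2 + w ^ 2) := by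
    rw [← Real.sqrt_sq_eq_abs]
    exact Real.sqrt_le_sqrt (by nlinarith [sq_nonneg v, sq_nonneg w])
  have hv : |v| ≤ Real.sqrt (u ^ 2 + v ^ 2 + w ^ 2) := by
    rw [← Real.sqrt_sq_eq_abs]
    exact Real.sqrt_le_sqrt (by nlinarith [sq_nonneg u, sq_nonneg w])
  have hw : |w| ≤ Real.sqrt (u ^ 2 + v ^ 2 + w ^ 2) := by
    rw [← Real.sqrt_sq_eq_abs]
    exact Real.sqrt_le_sqrt (by nlinarith [sq_nonneg u, sq_nonneg v])
  exact ⟨hu.trans h, hv.trans h, hw.trans h⟩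

/-- let Λ(x,y,z) = (λ⁻¹x, λy, z) and f satisfy (i) |π_s| ≤ x₀ is
f-invariant and (ii) ‖f(p) − Λ(p)‖ ≤ c (Euclidean norm) whenever |π_s(p)| ≤ x₀. Then
(a) f(B(x₀,y,z)) ⊆ B(x₀, λy+c, z+c) for all y,z > 0, and (b) for every β > λ there is
y₀ > 0 with fⁿ(B(x₀,y,z)) ⊆ B(x₀, βⁿy, z+nc) for all y > y₀, z > 0 and n ≥ 1. -/
theorem stmt15 (lam x₀ c : ℝ) (hlam : 1 < lam) (hx₀ : 0 < x₀) (hc : 0 < c)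
    (f : ℝ × ℝ × ℝ → ℝ × ℝ × ℝ)
    (hinv : ∀ p : ℝ × ℝ × ℝ, |p.1| ≤ x₀ → |(f p).1| ≤ x₀)
    (hclose : ∀ p : ℝ × ℝ × ℝ, |p.1| ≤ x₀ →
      Real.sqrt (((f p).1 - lam⁻¹ * p.1) ^ 2 + ((f p).2.1 - lam * p.2.1) ^ 2 +
        ((f p).2.2 - p.2.2) ^ 2) ≤ c) :
    (∀ y z : ℝ, 0 < y → 0 < z →
      f '' Box x₀ y z ⊆ Box x₀ (lam * y + c) (z + c)) ∧
    (∀ β : ℝ, lam < β → ∃ y₀ > 0, ∀ y z : ℝ, y₀ < y → 0 < z → ∀ n : ℕ, 0 < n →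
      f^[n] '' Box x₀ y z ⊆ Box x₀ (β ^ n * y) (z + n * c)) := by
  have key : ∀ (y z : ℝ), 0 ≤ y → 0 ≤ z →
      f '' Box x₀ y z ⊆ Box x₀ (lam * y + c) (z + c) := by
    rintro y z hy hz q ⟨p, ⟨hp1, hp2, hp3⟩, rfl⟩
    obtain ⟨hu, hv, hw⟩ := comp_bound _ _ _ _ (hclose p hp1)
    refine ⟨hinv p hp1, ?_, ?_⟩
    · have : |(f p).2.1| ≤ |lam * p.2.1| + c := by
        calc |(f p).2.1| = |((f p).2.1 - lam * p.2.1) + lam * p.2.1| := by ring_nf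
          _ ≤ |(f p).2.1 - lam * p.2.1| + |lam * p.2.1| := abs_add_le _ _
          _ ≤ |lam * p.2.1| + c := by linarith
      have h2 : |lam * p.2.1| ≤ lam * y := by
        rw [abs_mul, abs_of_pos (by linarith : (0:ℝ) < lam)]
        nlinarith
      linarith
    · have : |(f p).2.2| ≤ |p.2.2| + c := by
        calc |(f p).2.2| = |((f p).2.2 - p.2.2) + p.2.2| := by ring_nf
          _ ≤ |(f p).2.2 - p.2.2| + |p.2.2| := abs_add_le _ _
          _ ≤ |p.2.2| + c := by linarith
      linarith
  refine ⟨fun y z hy hz => key y z hy.le hz.le, ?_⟩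
  intro β hβ
  refine ⟨c / (β - lam), div_pos hc (by linarith), fun y z hy hz n hn => ?_⟩
  have hβ1 : 1 < β := lt_trans hlam hβ
  have hy0 : 0 < y := lt_trans (div_pos hc (by linarith)) hy
  have hcy : c < (β - lam) * y := by
    rw [div_lt_iff₀ (by linarith)] at hy; linarith
  clear hn
  induction n with
  | zero =>
    simp only [Function.iterate_zero, Set.image_id, pow_zero, one_mul,
      Nat.cast_zero, zero_mul, add_zero]
    exact subset_rfl
  | succ n ih =>
    rw [Function.iterate_succ', Set.image_comp]
    have hβn : (1:ℝ) ≤ β ^ n := one_le_pow₀ hβ1.le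
    have step := key (β ^ n * y) (z + n * c) (by positivity) (by positivity)
    refine (Set.image_mono (f := f) ih).trans (step.trans ?_)
    intro q ⟨h1, h2, h3⟩
    refine ⟨h1, ?_, ?_⟩
    · have : lam * (β ^ n * y) + c ≤ β ^ (n + 1) * y := by
        have : c ≤ (β - lam) * (β ^ n * y) := by nlinarith
        rw [pow_succ]; nlinarith
      linarith
    · push_cast; linarith
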